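/- Let N ≥ 1 and let H : ℝ → ℝ be strictly increasing and bounded below. Then for every function g : ℝ → ℝ that is a strictly increasing surjection of ℝ onto ℝ, there exists X ∈ 𝕊(N) with X ≤ 0 such that Σ_{j=1}^{N} H(λ_j(X)) > g(λ₁(X)). In particular, the function F_H(X) = −Σ_{j=1}^{N} H(λ_j(X)) does not belong to Class M when H is bounded below. -/

import Mathlib

open Matrix

/-- The Loewner partial order on matrices: `X ≤ Y` iff `Y - X` is positive semidefinite. -/
def Loewner {n : Type*} [Fintype n] (X Y : Matrix n n ℝ) : Prop := (Y - X).PosSemidef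

/-- The eigenvalues of a real symmetric matrix, listed in increasing order. -/
noncomputable def eigs {N : ℕ} (X : Matrix (Fin N) (Fin N) ℝ) : Fin N → ℝ :=
  if h : X.IsHermitian then h.eigenvalues ∘ Tuple.sort h.eigenvalues else 0

/-- The smallest eigenvalue of a real symmetric matrix. -/
noncomputable def lam1 {N : ℕ} (X : Matrix (Fin N) (Fin N) ℝ) : ℝ := ⨅ i, eigs X i

/-- The largest eigenvalue of a real symmetric matrix. -/
noncomputable def lamN {N : ℕ} (X : Matrix (Fin N) (Fin N) ℝ) : ℝ := ⨆ i, eigs X i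

private lemma psd_smul_one' {N : ℕ} (c : ℝ) (hc : 0 ≤ c) :
    (c • 1 : Matrix (Fin N) (Fin N) ℝ).PosSemidef := by
  rw [posSemidef_iff_dotProduct_mulVec]
  constructor
  · simp [Matrix.IsHermitian]
  · intro x
    simp only [smul_mulVec, one_mulVec, dotProduct_smul, smul_eq_mul]
    refine mul_nonneg hc ?_
    simpa [dotProduct] using Finset.sum_nonneg fun i _ => mul_self_nonneg (x i)

private lemma eig_smul_one' {N : ℕ} (hN : 1 ≤ N) (s : ℝ)
    (h : ((s • 1 : Matrix (Fin N) (Fin N) ℝ)).IsHermitian) (i : Fin N) :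
    h.eigenvalues i = s := by
  haveI : NeZero N := ⟨by omega⟩
  have hm := h.eigenvalues_mem_spectrum_real i
  have h2 : spectrum ℝ (s • 1 : Matrix (Fin N) (Fin N) ℝ) = {s} := by
    have hs : (s • 1 : Matrix (Fin N) (Fin N) ℝ) = algebraMap ℝ _ s := by
      simp [Algebra.algebraMap_eq_smul_one]
    rw [hs]; exact spectrum.scalar_eq s
  rw [h2] at hm
  simpa using hm

/-- If `H` is strictly increasing and bounded below, then for every
increasing bijection `g` of `ℝ` there is `X ≤ 0` with `Σ_j H(λ_j(X)) > g(λ₁(X))`;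
hence `F_H(X) = −Σ_j H(λ_j(X))` is not of Class M. -/
theorem FH_not_classM_of_bddBelow {N : ℕ} (hN : 1 ≤ N) (H : ℝ → ℝ) (hH : StrictMono H)
    (hbdd : ∃ K : ℝ, ∀ t : ℝ, K ≤ H t) :
    ∀ g : ℝ → ℝ, StrictMono g → Function.Surjective g →
      ∃ X : Matrix (Fin N) (Fin N) ℝ, X.IsHermitian ∧
        Loewner X (0 : Matrix (Fin N) (Fin N) ℝ) ∧
        ∑ j : Fin N, H (eigs X j) > g (lam1 X) := by
  haveI : NeZero N := ⟨by omega⟩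
  obtain ⟨K, hK⟩ := hbdd
  intro g hg hgs
  set y : ℝ := min (N * K) (g 0) - 1 with hy
  obtain ⟨s, hgsy⟩ := hgs y
  have hs0 : s < 0 := by
    have : g s < g 0 := by
      rw [hgsy, hy]
      have := min_le_right (N * K : ℝ) (g 0); linarith
    exact hg.lt_iff_lt.mp this
  refine ⟨s • 1, ?_, ?_, ?_⟩
  · simp [Matrix.IsHermitian]
  · unfold Loewner
    rw [zero_sub, ← neg_smul]
    exact psd_smul_one' (-s) (by linarith)
  · have hX : ((s • 1 : Matrix (Fin N) (Fin N) ℝ)).IsHermitian := by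
      simp [Matrix.IsHermitian]
    have heig : ∀ j : Fin N, eigs (s • 1 : Matrix (Fin N) (Fin N) ℝ) j = s := by
      intro j
      unfold eigs
      rw [dif_pos hX]
      exact eig_smul_one' hN s hX _
    have hinf : lam1 (s • 1 : Matrix (Fin N) (Fin N) ℝ) = s := by
      unfold lam1
      simp only [heig]
      exact ciInf_const
    rw [hinf, hgsy]
    have hsum : ∑ j : Fin N, H (eigs (s • 1 : Matrix (Fin N) (Fin N) ℝ) j) = N * H s := by
      simp [heig, Finset.sum_const, mul_comm]
    rw [hsum, hy]
    have h1 : (N : ℝ) * K ≤ N * H s := by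
      have := hK s
      have hN' : (0 : ℝ) ≤ N := Nat.cast_nonneg N
      nlinarith
    have := min_le_left (N * K : ℝ) (g 0)
    linarith
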